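/- arXiv:1505.04701 — 2 statements merged into one kernel-verified Lean document; each statement's English description precedes it below -/
import Mathlib

section
/- Let G be a countable group, S = (S_n) a Følner sequence, A ⊆ G with d̄_S(A) ≥ α > 0, and Y a finite nonempty subset of G. Then for every ε > 0 there exist arbitrarily large n such that (1/|S_n|) Σ_{x ∈ S_n} |x(A ∩ S_n)⁻¹ ∩ Y| / |Y| ≥ α − ε − Σ_{y ∈ Y} |y⁻¹S_n △ S_n| / |S_n|. -/
open Filter Pointwise
open scoped symmDiff Classical

variable {G : Type*}

/-- Upper density of `A` along the sequence of finite sets `S`. -/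
noncomputable def upperDens (S : ℕ → Finset G) (A : Set G) : ℝ :=
  limsup (fun n => (((S n).filter (· ∈ A)).card : ℝ) / ((S n).card : ℝ)) atTop

/-- Lower density of `A` along the sequence of finite sets `S`. -/
noncomputable def lowerDens (S : ℕ → Finset G) (A : Set G) : ℝ :=
  liminf (fun n => (((S n).filter (· ∈ A)).card : ℝ) / ((S n).card : ℝ)) atTop

/-- `S` is a (left) Følner sequence for `G`. -/
def IsFolner [Group G] (S : ℕ → Finset G) : Prop :=
  (∀ n, (S n).Nonempty) ∧
  ∀ x : G, Tendsto (fun n => (((x • S n) ∆ S n).card : ℝ) / ((S n).card : ℝ)) atTop (nhds 0)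

/-- (Left) Banach density: supremum of upper densities over all Følner sequences. -/
noncomputable def banachDens [Group G] (A : Set G) : ℝ :=
  sSup {d : ℝ | ∃ S : ℕ → Finset G, IsFolner S ∧ d = upperDens S A}

theorem stmt10 [Group G] [Countable G] (S : ℕ → Finset G) (hS : IsFolner S) (A : Set G)
    (α : ℝ) (hα : 0 < α) (hA : α ≤ upperDens S A) (Y : Finset G) (hY : Y.Nonempty)
    (ε : ℝ) (hε : 0 < ε) (N : ℕ) :
    ∃ n ≥ N,
      α - ε - ∑ y ∈ Y, (((y⁻¹ • S n) ∆ S n).card : ℝ) / ((S n).card : ℝ) ≤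
        (1 / ((S n).card : ℝ)) *
          ∑ x ∈ S n, (((x • ((S n).filter (· ∈ A))⁻¹) ∩ Y).card : ℝ) / (Y.card : ℝ) := by
  have hfreq : ∃ᶠ n in atTop,
      α - ε < (((S n).filter (· ∈ A)).card : ℝ) / ((S n).card : ℝ) := by
    apply frequently_lt_of_lt_limsup
    · exact isCoboundedUnder_le_of_le atTop fun n =>
        div_nonneg (by positivity) (by positivity)
    · exact lt_of_lt_of_le (by linarith) hA
  obtain ⟨n, hnN, hn⟩ := frequently_atTop.mp hfreq N
  refine ⟨n, hnN, ?_⟩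
  set C := (S n).filter (· ∈ A) with hCdef
  have hCS : C ⊆ S n := Finset.filter_subset _ _
  have hs : (0:ℝ) < (S n).card := by exact_mod_cast (hS.1 n).card_pos
  have hk : (1:ℝ) ≤ Y.card := by exact_mod_cast hY.card_pos
  have hmem : ∀ x y : G, y ∈ x • C⁻¹ ↔ x ∈ y • C := by
    intro x y
    simp only [Finset.mem_smul_finset, Finset.mem_inv, smul_eq_mul]
    constructor
    · rintro ⟨c, ⟨d, hd, rfl⟩, rfl⟩
      exact ⟨d, hd, by group⟩
    · rintro ⟨c, hc, rfl⟩
      exact ⟨c⁻¹, ⟨c, hc, rfl⟩, by group⟩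
  have key : ∑ x ∈ S n, ((x • C⁻¹) ∩ Y).card = ∑ y ∈ Y, ((y • C) ∩ S n).card := by
    calc ∑ x ∈ S n, ((x • C⁻¹) ∩ Y).card
        = ∑ x ∈ S n, ∑ y ∈ Y, if x ∈ y • C then 1 else 0 := by
          refine Finset.sum_congr rfl fun x _ => ?_
          rw [Finset.inter_comm, ← Finset.filter_mem_eq_inter, Finset.card_filter]
          exact Finset.sum_congr rfl fun y _ => if_congr (hmem x y) rfl rfl
      _ = ∑ y ∈ Y, ∑ x ∈ S n, if x ∈ y • C then 1 else 0 := Finset.sum_comm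
      _ = ∑ y ∈ Y, ((y • C) ∩ S n).card := by
          refine Finset.sum_congr rfl fun y _ => ?_
          rw [← Finset.card_filter, Finset.filter_mem_eq_inter, Finset.inter_comm]
  have bound : ∀ y ∈ Y,
      (C.card : ℝ) - (((y⁻¹ • S n) ∆ S n).card : ℝ) ≤ (((y • C) ∩ S n).card : ℝ) := by
    intro y _
    have h1 : ((y • C) ∩ S n).card = (C ∩ (y⁻¹ • S n)).card := by
      rw [← Finset.card_smul_finset y⁻¹ ((y • C) ∩ S n), Finset.smul_finset_inter,
        inv_smul_smul]
    have hsub : C \ (y⁻¹ • S n) ⊆ (y⁻¹ • S n) ∆ S n := by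
      intro a ha
      rw [Finset.mem_sdiff] at ha
      rw [Finset.mem_symmDiff]
      exact Or.inr ⟨hCS ha.1, ha.2⟩
    have h2 : C.card ≤ (C ∩ (y⁻¹ • S n)).card + ((y⁻¹ • S n) ∆ S n).card := by
      calc C.card = (C ∩ (y⁻¹ • S n)).card + (C \ (y⁻¹ • S n)).card :=
            (Finset.card_inter_add_card_sdiff _ _).symm
        _ ≤ _ := Nat.add_le_add_left (Finset.card_le_card hsub) _
    have h2' : (C.card:ℝ) ≤ ((C ∩ (y⁻¹ • S n)).card : ℝ) + (((y⁻¹ • S n) ∆ S n).card : ℝ) := by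
      exact_mod_cast h2
    rw [h1]
    linarith
  have hsum : ∑ x ∈ S n, (((x • C⁻¹) ∩ Y).card : ℝ) / (Y.card : ℝ)
      = (∑ y ∈ Y, (((y • C) ∩ S n).card : ℝ)) / (Y.card : ℝ) := by
    rw [← Finset.sum_div, ← Nat.cast_sum, ← Nat.cast_sum, key]
  set s : ℝ := ((S n).card : ℝ)
  set k : ℝ := (Y.card : ℝ)
  set D : ℝ := ∑ y ∈ Y, (((y⁻¹ • S n) ∆ S n).card : ℝ) with hD
  set M : ℝ := ∑ y ∈ Y, (((y • C) ∩ S n).card : ℝ) with hM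
  have hD0 : 0 ≤ D := Finset.sum_nonneg fun y _ => by positivity
  have hMD : k * (C.card : ℝ) - D ≤ M := by
    have h := Finset.sum_le_sum bound
    rw [Finset.sum_sub_distrib, Finset.sum_const, nsmul_eq_mul] at h
    exact le_of_eq_of_le (by rw [hD]) h
  have hk0 : (0:ℝ) < k := lt_of_lt_of_le one_pos hk
  have hDsum : ∑ y ∈ Y, (((y⁻¹ • S n) ∆ S n).card : ℝ) / s = D / s := by
    rw [← Finset.sum_div]
  rw [hDsum, hsum]
  have e1 : (1 / s) * (M / k) = M / (s * k) := by field_simp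
  have h4 : (k * (C.card : ℝ) - D) / (s * k) ≤ M / (s * k) := by gcongr
  have e2 : (k * (C.card : ℝ) - D) / (s * k) = (C.card : ℝ) / s - D / (s * k) := by
    rw [sub_div]
    congr 1
    rw [mul_comm s k, mul_div_mul_left _ _ (ne_of_gt hk0)]
  have h5 : D / (s * k) ≤ D / s := by
    apply div_le_div_of_nonneg_left hD0 hs
    nlinarith
  have hcd : α - ε ≤ (C.card : ℝ) / s := le_of_lt hn
  linarith [e1, h4, e2, h5, hcd]
end

section
/- Let G be a group, let C, D be finite subsets of G, let γ_0, ..., γ_n ∈ G and s_0, ..., s_n ∈ G be such that for each 1 ≤ j ≤ n, s_j γ_j ∉ {s_0, ..., s_{j-1}} D C. Then the sets s_0 D, s_1(γ_1 C⁻¹ ∩ D), ..., s_n(γ_n C⁻¹ ∩ D) are pairwise disjoint. -/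
open Filter Pointwise
open scoped symmDiff Classical

variable {G : Type*}

theorem stmt11 [Group G] (C D : Finset G) (n : ℕ) (γ s : ℕ → G)
    (h : ∀ j, 1 ≤ j → j ≤ n →
      s j * γ j ∉ (Finset.image s (Finset.range j)) * D * C) :
    Set.PairwiseDisjoint (Set.Iic n)
      (fun j => if j = 0 then s 0 • D else s j • ((γ j • C⁻¹) ∩ D)) := by
  have key : ∀ i j, i ≤ n → j ≤ n → i < j →
      Disjoint ((if i = 0 then s 0 • D else s i • ((γ i • C⁻¹) ∩ D)) : Finset G)
        (if j = 0 then s 0 • D else s j • ((γ j • C⁻¹) ∩ D)) := by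
    intro i j hi hj hij
    rw [if_neg (by omega : j ≠ 0), Finset.disjoint_left]
    intro x hx hxj
    have hxD : x ∈ s i • D := by
      split_ifs at hx with h0
      · subst h0; exact hx
      · rw [Finset.mem_smul_finset] at hx
        obtain ⟨a, ha, rfl⟩ := hx
        exact Finset.smul_mem_smul_finset (Finset.mem_inter.mp ha).2
    rw [Finset.mem_smul_finset] at hxD hxj
    obtain ⟨d, hd, hxd⟩ := hxD
    obtain ⟨b, hb, hxb⟩ := hxj
    obtain ⟨hbC, hbD⟩ := Finset.mem_inter.mp hb
    rw [Finset.mem_smul_finset] at hbC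
    obtain ⟨c, hc, rfl⟩ := hbC
    have hc' : c⁻¹ ∈ C := by simpa using hc
    apply h j (by omega) hj
    have heq : s j * γ j = (s i * d) * c⁻¹ := by
      have h2 : s j * (γ j * c) = s i * d := hxb.trans hxd.symm
      have := congrArg (· * c⁻¹) h2
      simpa [mul_assoc] using this
    rw [heq]
    exact Finset.mul_mem_mul
      (Finset.mul_mem_mul (Finset.mem_image.mpr ⟨i, Finset.mem_range.mpr hij, rfl⟩) hd) hc'
  intro i hi j hj hij
  rcases hij.lt_or_gt with h' | h'
  · exact key i j hi hj h'
  · exact (key j i hj hi h').symm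
end
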